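/- Let u ∈ H^1(ℝ) with E_0 = ∫_ℝ u^2 dx and E_1 = ∫_ℝ (√(1+u_x^2)-1) dx finite. Then ‖u‖_{L^∞}^4 ≤ 2 E_0 E_1 + E_1^2 ‖u‖_{L^∞}^2, and consequently ‖u‖_{L^∞} ≤ F_1 where F_1 = (1/√2)(E_1^2 + (8 E_0 E_1 + E_1^4)^{1/2})^{1/2}. -/

import Mathlib

open MeasureTheory

/-- If `u ∈ H¹(ℝ)` with `E₀ = ∫ u²` and `E₁ = ∫ (√(1+u_x²)-1)`, and `M` is the
supremum of `|u|`, then `M⁴ ≤ 2E₀E₁ + E₁²M²` and consequently `M ≤ F₁` with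
`F₁ = (1/√2)(E₁² + (8E₀E₁ + E₁⁴)^{1/2})^{1/2}`. -/
theorem Linfty_bound_by_E0_E1
    (u : ℝ → ℝ) (hu : ContDiff ℝ 1 u)
    (hu2 : Integrable (fun x => (u x)^2))
    (hE1int : Integrable (fun x => Real.sqrt (1 + (deriv u x)^2) - 1))
    (hlim_top : Filter.Tendsto u Filter.atTop (nhds 0))
    (hlim_bot : Filter.Tendsto u Filter.atBot (nhds 0))
    (E0 E1 M : ℝ)
    (hE0 : E0 = ∫ x : ℝ, (u x)^2)
    (hE1 : E1 = ∫ x : ℝ, (Real.sqrt (1 + (deriv u x)^2) - 1))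
    (hM : IsLUB (Set.range fun x => |u x|) M) :
    M^4 ≤ 2 * E0 * E1 + E1^2 * M^2 ∧
    M ≤ (1 / Real.sqrt 2) *
      Real.sqrt (E1^2 + Real.sqrt (8 * E0 * E1 + E1^4)) := by
  have hc : Continuous u := hu.continuous
  have hc' : Continuous (deriv u) := hu.continuous_deriv le_rfl
  set w : ℝ → ℝ := fun x => Real.sqrt (1 + (deriv u x)^2) - 1 with hw_def
  set g : ℝ → ℝ := fun x => 1 + Real.sqrt (1 + (deriv u x)^2) with hg_def
  clear_value w g
  have hw_cont : Continuous w := hw_def ▸ (Real.continuous_sqrt.comp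
    (by continuity : Continuous fun x => 1 + (deriv u x)^2)).sub continuous_const
  have hg_cont : Continuous g := hg_def ▸ continuous_const.add
    (Real.continuous_sqrt.comp (by continuity : Continuous fun x => 1 + (deriv u x)^2))
  have hsq : ∀ x, (Real.sqrt (1 + (deriv u x)^2))^2 = 1 + (deriv u x)^2 := fun x =>
    Real.sq_sqrt (by positivity)
  have hw_nonneg : ∀ x, 0 ≤ w x := by
    intro x
    have := hsq x
    have h2 := Real.sqrt_nonneg (1 + (deriv u x)^2)
    simp only [hw_def]
    nlinarith [sq_nonneg (deriv u x)]
  have hg_two : ∀ x, 2 ≤ g x := by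
    intro x
    have := hw_nonneg x
    simp only [hw_def] at this
    simp only [hg_def]
    linarith
  have hg_nonneg : ∀ x, 0 ≤ g x := fun x => le_trans (by norm_num) (hg_two x)
  have hwg : ∀ x, (deriv u x)^2 = w x * g x := by
    intro x
    have := hsq x
    simp only [hw_def, hg_def]
    nlinarith
  have hbound : ∀ x, |u x| ≤ M := fun x => hM.1 ⟨x, rfl⟩
  have hMnn : 0 ≤ M := le_trans (abs_nonneg _) (hbound 0)
  have hE1nn : 0 ≤ E1 := hE1 ▸ integral_nonneg hw_nonneg
  have hE0nn : 0 ≤ E0 := hE0 ▸ integral_nonneg (fun x => sq_nonneg _)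
  -- integrability facts
  have h_u2w : Integrable (fun x => (u x)^2 * w x) := by
    refine Integrable.mono' (hE1int.const_mul (M^2)) ?_ ?_
    · exact ((hc.pow 2).mul hw_cont).aestronglyMeasurable
    · filter_upwards with x
      have h1 : (u x)^2 ≤ M^2 := by
        have := hbound x
        nlinarith [abs_nonneg (u x), sq_abs (u x)]
      have := hw_nonneg x
      rw [Real.norm_eq_abs, abs_of_nonneg (by positivity)]
      exact mul_le_mul_of_nonneg_right h1 this
  have h_u2g : Integrable (fun x => (u x)^2 * g x) := by
    have heq : (fun x => (u x)^2 * g x) = fun x => (u x)^2 * w x + 2 * (u x)^2 := by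
      funext x; simp only [hw_def, hg_def]; ring
    rw [heq]
    exact h_u2w.add (hu2.const_mul 2)
  have h_uu' : Integrable (fun x => u x * deriv u x) := by
    refine Integrable.mono' (((h_u2g.add hE1int).div_const 2)) ?_ ?_
    · exact (hc.mul hc').aestronglyMeasurable
    · filter_upwards with x
      simp only [Pi.add_apply]
      have hd2 := hwg x
      have hgx := hg_nonneg x
      have hwx := hw_nonneg x
      rw [Real.norm_eq_abs, abs_mul]
      have h1 : |deriv u x| = Real.sqrt (w x) * Real.sqrt (g x) := by
        rw [← Real.sqrt_mul hwx, ← hd2, Real.sqrt_sq_eq_abs]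
      rw [h1]
      have h2 : (|u x| * Real.sqrt (g x) - Real.sqrt (w x))^2 ≥ 0 := sq_nonneg _
      have h3 : (Real.sqrt (g x))^2 = g x := Real.sq_sqrt hgx
      have h4 : (Real.sqrt (w x))^2 = w x := Real.sq_sqrt hwx
      have h5 : (|u x|)^2 = (u x)^2 := sq_abs _
      have expand : (|u x| * Real.sqrt (g x) - Real.sqrt (w x))^2 =
          |u x|^2 * (Real.sqrt (g x))^2
            - 2*(|u x| * (Real.sqrt (w x) * Real.sqrt (g x))) + (Real.sqrt (w x))^2 := by ring
      rw [h3, h4, h5] at expand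
      linarith [h2, expand.le, expand.ge]
  -- pointwise estimate
  have hptw : ∀ x, (u x)^2 ≤ ∫ y, |u y * deriv u y| := by
    intro x
    have hderiv : ∀ y, HasDerivAt (fun z => (u z)^2) (2 * u y * deriv u y) y := by
      intro y
      have := ((hu.differentiable one_ne_zero y).hasDerivAt).fun_pow 2
      simpa [mul_comm, mul_assoc] using this
    have h2int : Integrable (fun y => 2 * u y * deriv u y) := by
      simpa [mul_assoc] using h_uu'.const_mul 2
    have htop : Filter.Tendsto (fun y => (u y)^2) Filter.atTop (nhds 0) := by
      simpa using hlim_top.pow 2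
    have hbot : Filter.Tendsto (fun y => (u y)^2) Filter.atBot (nhds 0) := by
      simpa using hlim_bot.pow 2
    have hIic : ∫ y in Set.Iic x, 2 * u y * deriv u y = (u x)^2 - 0 :=
      integral_Iic_of_hasDerivAt_of_tendsto' (fun y _ => hderiv y) h2int.integrableOn hbot
    have hIoi : ∫ y in Set.Ioi x, 2 * u y * deriv u y = 0 - (u x)^2 :=
      integral_Ioi_of_hasDerivAt_of_tendsto' (fun y _ => hderiv y) h2int.integrableOn htop
    have habs1 : ∫ y in Set.Iic x, 2 * u y * deriv u y ≤ ∫ y in Set.Iic x, |2 * u y * deriv u y| := by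
      refine le_trans (le_abs_self _) ?_
      simpa only [Real.norm_eq_abs] using norm_integral_le_integral_norm (μ := volume.restrict (Set.Iic x)) (fun y => 2 * u y * deriv u y)
    have habs2 : -(∫ y in Set.Ioi x, 2 * u y * deriv u y) ≤ ∫ y in Set.Ioi x, |2 * u y * deriv u y| := by
      refine le_trans (neg_le_abs _) ?_
      simpa only [Real.norm_eq_abs] using norm_integral_le_integral_norm (μ := volume.restrict (Set.Ioi x)) (fun y => 2 * u y * deriv u y)
    have hsplit : (∫ y in Set.Iic x, |2 * u y * deriv u y|) + ∫ y in Set.Ioi x, |2 * u y * deriv u y| = ∫ y, |2 * u y * deriv u y| :=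
      intervalIntegral.integral_Iic_add_Ioi h2int.abs.integrableOn h2int.abs.integrableOn
    have heq : ∫ y, |2 * u y * deriv u y| = 2 * ∫ y, |u y * deriv u y| := by
      rw [← integral_const_mul]
      congr 1; funext y
      rw [abs_mul, abs_mul]
      simp [abs_of_nonneg, mul_assoc, abs_mul]
    nlinarith [hIic, hIoi, habs1, habs2, hsplit, heq]
  -- Cauchy-Schwarz
  set A : ℝ := ∫ x, (u x)^2 * g x with hA_def
  have hCS : (∫ y, |u y * deriv u y|) ≤ Real.sqrt A * Real.sqrt E1 := by
    have hpq : Real.HolderConjugate 2 2 := Real.HolderConjugate.two_two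
    have hf_cont : Continuous (fun x => |u x| * Real.sqrt (g x)) :=
      (continuous_abs.comp hc).mul (Real.continuous_sqrt.comp hg_cont)
    have hg_cont2 : Continuous (fun x => Real.sqrt (w x)) := Real.continuous_sqrt.comp hw_cont
    have hfsq : Integrable (fun x => (|u x| * Real.sqrt (g x))^2) := by
      have : (fun x => (|u x| * Real.sqrt (g x))^2) = fun x => (u x)^2 * g x := by
        funext x
        rw [mul_pow, sq_abs, Real.sq_sqrt (hg_nonneg x)]
      rw [this]; exact h_u2g
    have hgsq : Integrable (fun x => (Real.sqrt (w x))^2) := by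
      have : (fun x => (Real.sqrt (w x))^2) = w := by
        funext x; exact Real.sq_sqrt (hw_nonneg x)
      rw [this]; exact hE1int
    have hfmem : MemLp (fun x => |u x| * Real.sqrt (g x)) (ENNReal.ofReal 2) volume := by
      have : (ENNReal.ofReal 2) = 2 := by norm_num
      rw [this, memLp_two_iff_integrable_sq hf_cont.aestronglyMeasurable]
      exact hfsq
    have hgmem : MemLp (fun x => Real.sqrt (w x)) (ENNReal.ofReal 2) volume := by
      have : (ENNReal.ofReal 2) = 2 := by norm_num
      rw [this, memLp_two_iff_integrable_sq hg_cont2.aestronglyMeasurable]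
      exact hgsq
    have := integral_mul_le_Lp_mul_Lq_of_nonneg hpq
      (Filter.Eventually.of_forall fun x => mul_nonneg (abs_nonneg _) (Real.sqrt_nonneg _))
      (Filter.Eventually.of_forall fun x => Real.sqrt_nonneg _) hfmem hgmem
    have hlhs : (∫ x, (|u x| * Real.sqrt (g x)) * Real.sqrt (w x)) = ∫ y, |u y * deriv u y| := by
      congr 1; funext x
      rw [abs_mul]
      have : |deriv u x| = Real.sqrt (w x) * Real.sqrt (g x) := by
        rw [← Real.sqrt_mul (hw_nonneg x), ← hwg x, Real.sqrt_sq_eq_abs]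
      rw [this]; ring
    have hr1 : (∫ x, ((|u x| * Real.sqrt (g x)) : ℝ) ^ (2:ℝ)) = A := by
      rw [hA_def]; congr 1; funext x
      rw [show ((2:ℝ)) = ((2:ℕ):ℝ) by norm_num, Real.rpow_natCast, mul_pow, sq_abs,
        Real.sq_sqrt (hg_nonneg x)]
    have hr2 : (∫ x, (Real.sqrt (w x)) ^ (2:ℝ)) = E1 := by
      rw [hE1]; congr 1; funext x
      rw [show ((2:ℝ)) = ((2:ℕ):ℝ) by norm_num, Real.rpow_natCast, Real.sq_sqrt (hw_nonneg x)]
    rw [hlhs, hr1, hr2] at this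
    calc (∫ y, |u y * deriv u y|) ≤ A ^ (1/(2:ℝ)) * E1 ^ (1/(2:ℝ)) := this
      _ = Real.sqrt A * Real.sqrt E1 := by rw [← Real.sqrt_eq_rpow, ← Real.sqrt_eq_rpow]
  -- bound on A
  have hAnn : 0 ≤ A := integral_nonneg fun x => mul_nonneg (sq_nonneg _) (hg_nonneg x)
  have hA_le : A ≤ 2 * E0 + M^2 * E1 := by
    have heq : (fun x => (u x)^2 * g x) = fun x => (u x)^2 * w x + 2 * (u x)^2 := by
      funext x; simp only [hw_def, hg_def]; ring
    rw [hA_def, heq, integral_add h_u2w (hu2.const_mul 2)]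
    have h1 : (∫ x, (u x)^2 * w x) ≤ ∫ x, M^2 * w x := by
      refine integral_mono h_u2w (hE1int.const_mul (M^2)) fun x => ?_
      have h1 : (u x)^2 ≤ M^2 := by
        have := hbound x
        nlinarith [abs_nonneg (u x), sq_abs (u x)]
      exact mul_le_mul_of_nonneg_right h1 (hw_nonneg x)
    rw [integral_const_mul] at h1
    rw [integral_const_mul]
    rw [hE1, hE0]
    linarith
  -- M^2 ≤ √A √E1, hence M^4 ≤ A * E1
  have hM2 : M^2 ≤ Real.sqrt A * Real.sqrt E1 := by
    have hC : 0 ≤ Real.sqrt A * Real.sqrt E1 := mul_nonneg (Real.sqrt_nonneg _) (Real.sqrt_nonneg _)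
    have hMle : M ≤ Real.sqrt (Real.sqrt A * Real.sqrt E1) := by
      refine hM.2 fun y hy => ?_
      obtain ⟨x, rfl⟩ := hy
      refine Real.le_sqrt_of_sq_le ?_
      rw [sq_abs]
      exact le_trans (hptw x) (hCS)
    have := Real.sq_sqrt hC
    nlinarith [Real.sqrt_nonneg (Real.sqrt A * Real.sqrt E1)]
  have hM4 : M^4 ≤ A * E1 := by
    have h1 : (M^2)^2 ≤ (Real.sqrt A * Real.sqrt E1)^2 := by
      have := mul_nonneg (Real.sqrt_nonneg A) (Real.sqrt_nonneg E1)
      nlinarith [sq_nonneg M]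
    have h2 : (Real.sqrt A * Real.sqrt E1)^2 = A * E1 := by
      rw [mul_pow, Real.sq_sqrt hAnn, Real.sq_sqrt hE1nn]
    nlinarith
  have hpart1 : M^4 ≤ 2 * E0 * E1 + E1^2 * M^2 := by
    nlinarith [mul_le_mul_of_nonneg_right hA_le hE1nn]
  refine ⟨hpart1, ?_⟩
  -- part 2
  have hDin : (0:ℝ) ≤ 8 * E0 * E1 + E1^4 := by positivity
  set D := Real.sqrt (8 * E0 * E1 + E1^4) with hD_def
  have hDnn : 0 ≤ D := Real.sqrt_nonneg _
  have hD2 : D^2 = 8 * E0 * E1 + E1^4 := Real.sq_sqrt hDin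
  have hM2b : 2 * M^2 ≤ E1^2 + D := by
    nlinarith [sq_nonneg (2*M^2 - E1^2 - D), sq_nonneg (2*M^2 - E1^2 + D)]
  have hEDnn : 0 ≤ E1^2 + D := by positivity
  have hMle : M ≤ Real.sqrt ((E1^2 + D) / 2) := by
    rw [Real.le_sqrt hMnn (by linarith)]
    linarith
  calc M ≤ Real.sqrt ((E1^2 + D) / 2) := hMle
    _ = 1 / Real.sqrt 2 * Real.sqrt (E1^2 + D) := by
        rw [Real.sqrt_div hEDnn]
        ring
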